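/- arXiv:2007.11724 — 2 statements merged into one kernel-verified Lean document; each statement's English description precedes it below -/
import Mathlib

section
/- For every H in the closed positive Weyl chamber of a reduced root system with positive roots Σ⁺, the product ∏_{α∈Σ⁺} (sinh⟨α,H⟩)² is comparable (with constants independent of H) to ( ∏_{α∈Σ⁺} ⟨α,H⟩/(1+⟨α,H⟩) )² · e^{⟨2ρ,H⟩}, where ρ = Σ_{α∈Σ⁺} α. -/
open scoped RealInnerProductSpace BigOperators

lemma sinh_bounds_aux (x : ℝ) (hx : 0 ≤ x) :
    (1/2 : ℝ) * (x / (1 + x)) * Real.exp x ≤ Real.sinh x ∧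
    Real.sinh x ≤ 2 * (x / (1 + x)) * Real.exp x := by
  have h1 : (0:ℝ) < 1 + x := by linarith
  set E := Real.exp x with hE
  set F := Real.exp (-x) with hF
  have he : E * F = 1 := by rw [hE, hF, ← Real.exp_add]; simp
  have hp : (0:ℝ) < E := Real.exp_pos x
  have hn : (0:ℝ) < F := Real.exp_pos _
  have h2 : 1 + 2*x ≤ E * E := by
    have := Real.add_one_le_exp (2*x)
    rw [show (2:ℝ)*x = x + x by ring, Real.exp_add] at this
    linarith
  have hF2 : 1 - 2*x ≤ F * F := by
    have := Real.add_one_le_exp (-(2*x))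
    rw [show -((2:ℝ)*x) = -x + -x by ring, Real.exp_add] at this
    linarith
  rw [Real.sinh_eq]
  constructor
  · have key : x / (1+x) * E ≤ E - F := by
      rw [div_mul_eq_mul_div, div_le_iff₀ h1]
      nlinarith [mul_le_mul_of_nonneg_right h2 hn.le, mul_pos hp hn]
    linarith
  · have key : E - F ≤ 4 * (x / (1+x) * E) := by
      rw [div_mul_eq_mul_div, mul_div_assoc', le_div_iff₀ h1]
      rcases le_or_gt (1/3 : ℝ) x with h | h
      · nlinarith [mul_pos hp hn]
      · nlinarith [mul_le_mul_of_nonneg_right hF2 hp.le, mul_pos hp hn]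
    linarith

lemma sinh_sq_bounds (x : ℝ) (hx : 0 ≤ x) :
    (1/4 : ℝ) * ((x / (1 + x)) ^ 2 * Real.exp (2 * x)) ≤ Real.sinh x ^ 2 ∧
    Real.sinh x ^ 2 ≤ 4 * ((x / (1 + x)) ^ 2 * Real.exp (2 * x)) := by
  obtain ⟨hlo, hhi⟩ := sinh_bounds_aux x hx
  have h1 : (0:ℝ) < 1 + x := by linarith
  have hg : 0 ≤ x / (1 + x) := div_nonneg hx h1.le
  have hp : (0:ℝ) < Real.exp x := Real.exp_pos x
  have hlo0 : 0 ≤ (1/2 : ℝ) * (x / (1 + x)) * Real.exp x := by positivity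
  have hs0 : 0 ≤ Real.sinh x := hlo0.trans hlo
  have hE2 : Real.exp (2 * x) = Real.exp x * Real.exp x := by
    rw [show (2:ℝ)*x = x + x by ring, Real.exp_add]
  constructor
  · have := mul_self_le_mul_self hlo0 hlo
    rw [hE2]; nlinarith
  · have := mul_self_le_mul_self hs0 hhi
    rw [hE2]; nlinarith

/-- The Cartan density `∏_{α∈Σ⁺} (sinh⟨α,H⟩)²` is comparable on the closed positive Weyl
chamber to `(∏_{α∈Σ⁺} ⟨α,H⟩/(1+⟨α,H⟩))² e^{⟨2ρ,H⟩}`, where `ρ = Σ_{α∈Σ⁺} α`. -/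
theorem cartan_density_comparable
    {𝔞 : Type*} [NormedAddCommGroup 𝔞] [InnerProductSpace ℝ 𝔞] [FiniteDimensional ℝ 𝔞]
    (S : Finset 𝔞) (hS : (0 : 𝔞) ∉ S) :
    ∃ c₁ c₂ : ℝ, 0 < c₁ ∧ c₁ ≤ c₂ ∧
      ∀ H : 𝔞, (∀ α ∈ S, 0 ≤ ⟪α, H⟫) →
        c₁ * ((∏ α ∈ S, ⟪α, H⟫ / (1 + ⟪α, H⟫)) ^ 2
            * Real.exp ⟪2 • (∑ α ∈ S, α), H⟫)
          ≤ ∏ α ∈ S, (Real.sinh ⟪α, H⟫) ^ 2 ∧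
        ∏ α ∈ S, (Real.sinh ⟪α, H⟫) ^ 2
          ≤ c₂ * ((∏ α ∈ S, ⟪α, H⟫ / (1 + ⟪α, H⟫)) ^ 2
            * Real.exp ⟪2 • (∑ α ∈ S, α), H⟫) := by
  refine ⟨(1/4 : ℝ) ^ S.card, (4 : ℝ) ^ S.card, by positivity,
    pow_le_pow_left₀ (by norm_num) (by norm_num) _, ?_⟩
  intro H hH
  have hsum : ⟪2 • (∑ α ∈ S, α), H⟫ = ∑ α ∈ S, 2 * ⟪α, H⟫ := by
    simp [two_smul, inner_add_left, sum_inner, two_mul, Finset.sum_add_distrib]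
  have hprod : (∏ α ∈ S, ⟪α, H⟫ / (1 + ⟪α, H⟫)) ^ 2 * Real.exp ⟪2 • (∑ α ∈ S, α), H⟫
      = ∏ α ∈ S, ((⟪α, H⟫ / (1 + ⟪α, H⟫)) ^ 2 * Real.exp (2 * ⟪α, H⟫)) := by
    rw [hsum, Real.exp_sum, ← Finset.prod_pow, ← Finset.prod_mul_distrib]
  rw [hprod]
  constructor
  · calc (1/4 : ℝ) ^ S.card * ∏ α ∈ S, ((⟪α, H⟫ / (1 + ⟪α, H⟫)) ^ 2 * Real.exp (2 * ⟪α, H⟫))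
        = ∏ α ∈ S, ((1/4 : ℝ) * ((⟪α, H⟫ / (1 + ⟪α, H⟫)) ^ 2 * Real.exp (2 * ⟪α, H⟫))) := by
          rw [← Finset.prod_const, ← Finset.prod_mul_distrib]
      _ ≤ ∏ α ∈ S, (Real.sinh ⟪α, H⟫) ^ 2 := by
          refine Finset.prod_le_prod (fun α hα => ?_) (fun α hα => ?_)
          · have h1 : (0:ℝ) < 1 + ⟪α, H⟫ := by linarith [hH α hα]
            positivity
          · exact (sinh_sq_bounds _ (hH α hα)).1
  · calc ∏ α ∈ S, (Real.sinh ⟪α, H⟫) ^ 2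
        ≤ ∏ α ∈ S, ((4 : ℝ) * ((⟪α, H⟫ / (1 + ⟪α, H⟫)) ^ 2 * Real.exp (2 * ⟪α, H⟫))) := by
          refine Finset.prod_le_prod (fun α hα => ?_) (fun α hα => ?_)
          · positivity
          · exact (sinh_sq_bounds _ (hH α hα)).2
      _ = (4 : ℝ) ^ S.card * ∏ α ∈ S, ((⟪α, H⟫ / (1 + ⟪α, H⟫)) ^ 2 * Real.exp (2 * ⟪α, H⟫)) := by
          rw [Finset.prod_mul_distrib, Finset.prod_const]
end

section
/- For every H in the closed positive Weyl chamber, the product ∏_{α∈Σ⁺} ⟨α,H⟩ / sinh⟨α,H⟩ (with the convention x/sinh x = 1 at x = 0) is comparable, with constants depending only on Σ⁺, to ( ∏_{α∈Σ⁺} (1+⟨α,H⟩) ) · e^{−⟨ρ,H⟩}. -/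
open scoped RealInnerProductSpace BigOperators

private lemma ground_pointwise (x : ℝ) (hx : 0 ≤ x) :
    (1/2 : ℝ) * ((1 + x) * Real.exp (-x)) ≤ (if x = 0 then 1 else x / Real.sinh x) ∧
    (if x = 0 then 1 else x / Real.sinh x) ≤ 2 * ((1 + x) * Real.exp (-x)) := by
  rcases eq_or_lt_of_le hx with h0 | h0
  · simp [← h0]; norm_num
  · rw [if_neg (ne_of_gt h0)]
    have hs : 0 < Real.sinh x := Real.sinh_pos_iff.mpr h0
    have hsinh : Real.sinh x = (Real.exp x - Real.exp (-x)) / 2 := Real.sinh_eq x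
    have hmul : Real.exp x * Real.exp (-x) = 1 := by
      rw [← Real.exp_add]; simp
    have hsq : Real.exp (-x) * Real.exp (-x) = Real.exp (-(2*x)) := by
      rw [← Real.exp_add]; ring_nf
    have h1 : 1 + x ≤ Real.exp x := by have := Real.add_one_le_exp x; linarith
    have h2 : 1 + (-(2*x)) ≤ Real.exp (-(2*x)) := by
      have := Real.add_one_le_exp (-(2*x)); linarith
    have h3 : 1 + (2*x) ≤ Real.exp (2*x) := by
      have := Real.add_one_le_exp (2*x); linarith
    have h4 : Real.exp (2*x) * Real.exp (-(2*x)) = 1 := by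
      rw [← Real.exp_add]; simp
    have hpos : 0 < Real.exp (-x) := Real.exp_pos _
    have hpos2 : 0 < Real.exp (-(2*x)) := Real.exp_pos _
    constructor
    · rw [le_div_iff₀ hs, hsinh]
      rcases le_total x 1 with hx1 | hx1
      · nlinarith [mul_pos hpos hpos]
      · nlinarith [mul_pos hpos hpos]
    · rw [div_le_iff₀ hs, hsinh]
      nlinarith [mul_pos hpos hpos, mul_pos (Real.exp_pos (2*x)) hpos2]

/-- The ground spherical function estimate: `∏_{α∈Σ⁺} ⟨α,H⟩/sinh⟨α,H⟩` (with value 1 when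
`⟨α,H⟩ = 0`) is comparable on the closed positive Weyl chamber to
`(∏_{α∈Σ⁺} (1+⟨α,H⟩)) e^{-⟨ρ,H⟩}`. -/
theorem ground_spherical_comparable
    {𝔞 : Type*} [NormedAddCommGroup 𝔞] [InnerProductSpace ℝ 𝔞] [FiniteDimensional ℝ 𝔞]
    (S : Finset 𝔞) (hS : (0 : 𝔞) ∉ S) :
    ∃ c₁ c₂ : ℝ, 0 < c₁ ∧ c₁ ≤ c₂ ∧
      ∀ H : 𝔞, (∀ α ∈ S, 0 ≤ ⟪α, H⟫) →
        c₁ * ((∏ α ∈ S, (1 + ⟪α, H⟫)) * Real.exp (-⟪∑ α ∈ S, α, H⟫))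
          ≤ ∏ α ∈ S, (if ⟪α, H⟫ = 0 then 1 else ⟪α, H⟫ / Real.sinh ⟪α, H⟫) ∧
        ∏ α ∈ S, (if ⟪α, H⟫ = 0 then 1 else ⟪α, H⟫ / Real.sinh ⟪α, H⟫)
          ≤ c₂ * ((∏ α ∈ S, (1 + ⟪α, H⟫)) * Real.exp (-⟪∑ α ∈ S, α, H⟫)) := by
  refine ⟨(1/2 : ℝ) ^ S.card, (2 : ℝ) ^ S.card, by positivity, ?_, ?_⟩
  · exact pow_le_pow_left₀ (by norm_num) (by norm_num) _
  intro H hH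
  have hprod : ∏ α ∈ S, ((1 + ⟪α, H⟫) * Real.exp (-⟪α, H⟫))
      = (∏ α ∈ S, (1 + ⟪α, H⟫)) * Real.exp (-⟪∑ α ∈ S, α, H⟫) := by
    rw [Finset.prod_mul_distrib, sum_inner, ← Finset.sum_neg_distrib, Real.exp_sum]
  constructor
  · calc (1/2 : ℝ) ^ S.card * ((∏ α ∈ S, (1 + ⟪α, H⟫)) * Real.exp (-⟪∑ α ∈ S, α, H⟫))
        = ∏ α ∈ S, ((1/2 : ℝ) * ((1 + ⟪α, H⟫) * Real.exp (-⟪α, H⟫))) := by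
          rw [Finset.prod_mul_distrib, Finset.prod_const, hprod]
      _ ≤ _ := by
          refine Finset.prod_le_prod (fun α hα => ?_) (fun α hα => ?_)
          · have := hH α hα; positivity
          · exact (ground_pointwise _ (hH α hα)).1
  · calc ∏ α ∈ S, (if ⟪α, H⟫ = 0 then 1 else ⟪α, H⟫ / Real.sinh ⟪α, H⟫)
        ≤ ∏ α ∈ S, (2 * ((1 + ⟪α, H⟫) * Real.exp (-⟪α, H⟫))) := by
          refine Finset.prod_le_prod (fun α hα => ?_) (fun α hα => (ground_pointwise _ (hH α hα)).2)
          split_ifs with h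
          · norm_num
          · have hx := hH α hα
            have hx' : 0 < ⟪α, H⟫ := lt_of_le_of_ne hx (Ne.symm h)
            exact div_nonneg hx (Real.sinh_pos_iff.mpr hx').le
      _ = (2 : ℝ) ^ S.card * ((∏ α ∈ S, (1 + ⟪α, H⟫)) * Real.exp (-⟪∑ α ∈ S, α, H⟫)) := by
          rw [Finset.prod_mul_distrib, Finset.prod_const, hprod]
end
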